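/- Let L be a finite-dimensional real vector space, let Ω be an alternating bilinear form on L, let θ > 0, and let H = ℝ × L be the Heisenberg group with multiplication (r,u)·(r̂,û) = (r + r̂ − Ω(u,û), u + û). Let Σ be a subgroup of H such that (θ,0) ∈ Σ and such that, as a subset of the real vector space ℝ × L, Σ equals the ℤ-span of some ℝ-basis of ℝ × L. Then the left-translation action of Σ on ℝ × L is cocompact: there exists a compact set K ⊆ ℝ × L such that for every x ∈ ℝ × L there is s ∈ Σ with s·x ∈ K; in fact K may be taken to be [0,θ] × Q, where Q is the image under the projection ℝ × L → L of a compact fundamental domain for the additive action of Σ on ℝ × L. -/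

import Mathlib

noncomputable section

/-- The Heisenberg multiplication `(r,u)·(r̂,û) = (r + r̂ − Ω(u,û), u + û)` on `ℝ × L`. -/
def heisMul {L : Type*} [AddCommGroup L] [Module ℝ L]
    (Ω : L →ₗ[ℝ] L →ₗ[ℝ] ℝ) (a b : ℝ × L) : ℝ × L :=
  (a.1 + b.1 - Ω a.2 b.2, a.2 + b.2)

lemma heisMul_assoc {L : Type*} [AddCommGroup L] [Module ℝ L]
    (Ω : L →ₗ[ℝ] L →ₗ[ℝ] ℝ) (a b c : ℝ × L) :
    heisMul Ω (heisMul Ω a b) c = heisMul Ω a (heisMul Ω b c) := by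
  simp only [heisMul, map_add, LinearMap.add_apply, Prod.mk.injEq]
  constructor
  · ring
  · exact add_assoc _ _ _

/-- A lattice `Σ` in the Heisenberg group `H = ℝ × L` containing `(θ,0)` acts cocompactly on
`ℝ × L` by Heisenberg left translations; in fact `K` may be taken to be `[0,θ] × Q`, where
`Q` is the image under the projection `ℝ × L → L` of a compact fundamental domain for the
additive action of `Σ`. -/
theorem stmt_14 {L : Type*} [NormedAddCommGroup L] [NormedSpace ℝ L] [FiniteDimensional ℝ L]
    (Ω : L →ₗ[ℝ] L →ₗ[ℝ] ℝ) (hΩalt : ∀ u : L, Ω u u = 0)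
    (θ : ℝ) (hθ : 0 < θ)
    (S : Set (ℝ × L))
    (hmul : ∀ a ∈ S, ∀ b ∈ S, heisMul Ω a b ∈ S)
    (hinv : ∀ a ∈ S, -a ∈ S)
    (hθS : ((θ, 0) : ℝ × L) ∈ S)
    (hlat : ∃ b : Module.Basis (Fin (Module.finrank ℝ (ℝ × L))) ℝ (ℝ × L),
      S = ((Submodule.span ℤ (Set.range ⇑b) : Submodule ℤ (ℝ × L)) : Set (ℝ × L))) :
    (∃ K : Set (ℝ × L), IsCompact K ∧ ∀ x : ℝ × L, ∃ s ∈ S, heisMul Ω s x ∈ K) ∧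
    (∀ D : Set (ℝ × L), IsCompact D → (∀ x : ℝ × L, ∃ s ∈ S, s + x ∈ D) →
      ∀ x : ℝ × L, ∃ s ∈ S,
        heisMul Ω s x ∈ (Set.Icc (0 : ℝ) θ) ×ˢ (Prod.snd '' D)) := by
  -- integer multiples of (θ,0) lie in S
  have hpow : ∀ n : ℤ, (((n : ℝ) * θ, 0) : ℝ × L) ∈ S := by
    have h0 : ((0, 0) : ℝ × L) ∈ S := by
      have := hmul _ hθS _ (hinv _ hθS)
      simpa [heisMul, hΩalt] using this
    intro n
    induction n using Int.induction_on with
    | zero => simpa using h0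
    | succ k ih =>
        have := hmul _ ih _ hθS
        simpa [heisMul, hΩalt, add_mul] using this
    | pred k ih =>
        have hneg : ((-θ, 0) : ℝ × L) ∈ S := by
          simpa [Prod.neg_mk] using hinv _ hθS
        have := hmul _ ih _ hneg
        have heq : heisMul Ω ((((-k : ℤ) : ℝ) * θ, 0) : ℝ × L) ((-θ, 0) : ℝ × L)
            = ((((-k - 1 : ℤ) : ℝ)) * θ, 0) := by
          simp [heisMul, hΩalt]; push_cast; ring
        rw [heq] at this
        exact this
  -- second part
  have part2 : ∀ D : Set (ℝ × L), IsCompact D → (∀ x : ℝ × L, ∃ s ∈ S, s + x ∈ D) →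
      ∀ x : ℝ × L, ∃ s ∈ S,
        heisMul Ω s x ∈ (Set.Icc (0 : ℝ) θ) ×ˢ (Prod.snd '' D) := by
    intro D hD hfund x
    obtain ⟨s, hs, hsx⟩ := hfund x
    set t : ℝ := s.1 + x.1 - Ω s.2 x.2 with ht
    set n : ℤ := -⌊t / θ⌋ with hn
    refine ⟨heisMul Ω (((n : ℝ) * θ, 0)) s, hmul _ (hpow n) _ hs, ?_⟩
    rw [heisMul_assoc]
    have hfst : (heisMul Ω (((n : ℝ) * θ, 0) : ℝ × L) (heisMul Ω s x))
        = ((n : ℝ) * θ + t, s.2 + x.2) := by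
      simp [heisMul, ht]
      try ring
    rw [hfst]
    constructor
    · have hfr : (n : ℝ) * θ + t = θ * Int.fract (t / θ) := by
        rw [Int.fract]
        push_cast [hn]
        field_simp
        ring
      rw [hfr]
      constructor
      · exact mul_nonneg hθ.le (Int.fract_nonneg _)
      · calc θ * Int.fract (t / θ) ≤ θ * 1 :=
              mul_le_mul_of_nonneg_left (Int.fract_lt_one _).le hθ.le
          _ = θ := mul_one θ
    · exact ⟨s + x, hsx, rfl⟩
  -- build a compact fundamental domain from the lattice basis
  obtain ⟨b, hb⟩ := hlat
  set f : (Fin (Module.finrank ℝ (ℝ × L)) → ℝ) → ℝ × L :=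
    fun c => ∑ i, c i • b i with hf
  have hfc : Continuous f :=
    continuous_finset_sum _ fun i _ => (continuous_apply i).smul continuous_const
  set D : Set (ℝ × L) := f '' Set.Icc 0 1 with hDdef
  have hDcomp : IsCompact D := (isCompact_Icc).image hfc
  have hDfund : ∀ x : ℝ × L, ∃ s ∈ S, s + x ∈ D := by
    intro x
    set c : Fin (Module.finrank ℝ (ℝ × L)) → ℝ := fun i => b.repr x i with hc
    have hxsum : x = ∑ i, c i • b i := (b.sum_repr x).symm
    set σ : ℝ × L := ∑ i, ⌊c i⌋ • b i with hσ
    have hσS : σ ∈ S := by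
      rw [hb]
      exact Submodule.sum_mem _ fun i _ =>
        Submodule.smul_mem _ _ (Submodule.subset_span (Set.mem_range_self i))
    refine ⟨-σ, hinv _ hσS, ?_⟩
    have hkey : -σ + x = f (fun i => Int.fract (c i)) := by
      rw [hσ, hxsum, hf]
      simp only [Int.fract, ← Int.cast_smul_eq_zsmul ℝ, ← Finset.sum_sub_distrib,
        neg_add_eq_sub, ← Finset.sum_sub_distrib, sub_smul]
    rw [hkey]
    exact ⟨fun i => Int.fract (c i), by
      constructor <;> intro i
      · exact Int.fract_nonneg _
      · exact (Int.fract_lt_one _).le, rfl⟩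
  exact ⟨⟨(Set.Icc (0 : ℝ) θ) ×ˢ (Prod.snd '' D),
    (isCompact_Icc).prod (hDcomp.image continuous_snd), part2 D hDcomp hDfund⟩, part2⟩
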